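/- (Kusmin–Landau inequality.) There is an absolute constant C > 0 such that the following holds. Suppose I ⊂ ℝ is a bounded interval, f : I → ℝ is continuously differentiable with f' monotone on I, and there exists λ > 0 such that λ < |f'(t)| < 1 − λ for all t ∈ I. Then |Σ_{n ∈ I ∩ ℤ} e(f(n))| ≤ C·λ^{−1}. -/

import Mathlib

open Filter Real
open scoped Classical

noncomputable section

/-- `Prec f g` formalizes `f(t) ≺ g(t)`: `g(t)/f(t) → ∞` as `t → ∞`. -/
def Prec (f g : ℝ → ℝ) : Prop := Tendsto (fun t => g t / f t) atTop atTop

/-- `Ll f g` formalizes `f(t) ≪ g(t)`: there are `C > 0` and `t₀ ≥ 1` with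
`f(t) ≤ C·g(t)` for all `t ≥ t₀`. -/
def Ll (f g : ℝ → ℝ) : Prop := ∃ C : ℝ, 0 < C ∧ ∃ t₀ : ℝ, 1 ≤ t₀ ∧ ∀ t ≥ t₀, f t ≤ C * g t

/-- the iterated logarithm `log₂(t) = log log t`. -/
def log2 (t : ℝ) : ℝ := Real.log (Real.log t)

/-- the iterated logarithm `log₄(t) = log log log log t`. -/
def log4 (t : ℝ) : ℝ := Real.log (Real.log (Real.log (Real.log t)))

/-- A Hardy field: a set of (germs at `+∞` of) eventually smooth real functions,
invariant under germ equivalence at `+∞`, forming a subring of the ring of germs that is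
a field and is closed under differentiation. -/
structure HardyField where
  carrier : Set (ℝ → ℝ)
  germ_closed : ∀ f g : ℝ → ℝ, f =ᶠ[atTop] g → f ∈ carrier → g ∈ carrier
  eventually_smooth : ∀ f ∈ carrier, ∀ᶠ t in atTop, ∀ n : ℕ, ContDiffAt ℝ n f t
  zero_mem : (0 : ℝ → ℝ) ∈ carrier
  one_mem : (1 : ℝ → ℝ) ∈ carrier
  add_mem : ∀ f ∈ carrier, ∀ g ∈ carrier, f + g ∈ carrier
  neg_mem : ∀ f ∈ carrier, -f ∈ carrier
  mul_mem : ∀ f ∈ carrier, ∀ g ∈ carrier, f * g ∈ carrier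
  inv_mem : ∀ f ∈ carrier, ¬ f =ᶠ[atTop] (0 : ℝ → ℝ) →
    ∃ g ∈ carrier, f * g =ᶠ[atTop] (1 : ℝ → ℝ)
  deriv_mem : ∀ f ∈ carrier, deriv f ∈ carrier

/-- Condition (A): `log(t)·log₄(t) ≺ f(t)`. -/
def CondA (f : ℝ → ℝ) : Prop := Prec (fun t => Real.log t * log4 t) f

/-- Condition (B): there is `j ∈ ℕ`, `j ≥ 1`, with `t^(j-1) ≺ f(t) ≺ t^j`. -/
def CondB (f : ℝ → ℝ) : Prop :=
  ∃ j : ℕ, 1 ≤ j ∧ Prec (fun t => t ^ (j - 1)) f ∧ Prec f (fun t => t ^ j)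

/-- The natural density of `A ⊆ ℕ` exists and equals `L`. -/
def natDensityIs (A : Set ℕ) (L : ℝ) : Prop :=
  Tendsto (fun N : ℕ => (((Finset.Icc 1 N).filter fun n => n ∈ A).card : ℝ) / N)
    atTop (nhds L)

/-- `e(x) = e^{2πix}`. -/
def e (x : ℝ) : ℂ := Complex.exp (2 * Real.pi * Complex.I * x)

/-- The value `ζ(m) = ∑_{n ≥ 1} 1/n^m` of the Riemann zeta function at a natural number `m`. -/
def zetaNat (m : ℕ) : ℝ := ∑' n : ℕ, (1 : ℝ) / ((n : ℝ) + 1) ^ m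

lemma sin_pi_mul_pos {g : ℝ} (h0 : 0 < g) (h1 : g < 1) : 0 < Real.sin (π * g) := by
  apply Real.sin_pos_of_pos_of_lt_pi
  · positivity
  · nlinarith [Real.pi_pos]

def vv (g : ℝ) : ℂ := -(1/2 : ℂ) - Complex.I * ((Real.cos (π*g) / Real.sin (π*g) : ℝ) : ℂ) / 2

lemma abs_e (x : ℝ) : ‖e x‖ = 1 := by
  rw [e, Complex.norm_exp]
  simp

lemma e_add (x y : ℝ) : e (x + y) = e x * e y := by
  rw [e, e, e, ← Complex.exp_add]
  push_cast
  ring_nf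

lemma alg_key (c s : ℂ) (h : s^2 + c^2 = 1) :
    ((c + s*Complex.I)^2 - 1) * (-(s/2) - Complex.I*c/2) = s := by
  linear_combination (-(1/2) * (s^3 + 2*c^2*s + c*s^2*Complex.I)) * Complex.I_sq +
    (s/2 - (c/2)*Complex.I) * h

lemma e_sub_one_mul_vv {g : ℝ} (h0 : 0 < g) (h1 : g < 1) : (e g - 1) * vv g = 1 := by
  have hs : Real.sin (π * g) ≠ 0 := ne_of_gt (sin_pi_mul_pos h0 h1)
  set c : ℂ := (Real.cos (π*g) : ℂ) with hc
  set s : ℂ := (Real.sin (π*g) : ℂ) with hsdef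
  have hs' : s ≠ 0 := by rw [hsdef]; exact_mod_cast hs
  have he : e g = (c + s * Complex.I)^2 := by
    rw [e, show (2 * (Real.pi:ℂ) * Complex.I * (g:ℝ) : ℂ) = (2:ℕ) * (((π * g : ℝ) : ℂ) * Complex.I) by push_cast; ring,
      Complex.exp_nat_mul, Complex.exp_mul_I, hc, hsdef, Complex.ofReal_cos, Complex.ofReal_sin]
  have hcs : s^2 + c^2 = 1 := by
    rw [hc, hsdef]
    exact_mod_cast congrArg (Complex.ofReal) (Real.sin_sq_add_cos_sq (π*g))
  have hvv : vv g = (-(s/2) - Complex.I*c/2) / s := by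
    rw [vv, Complex.ofReal_div, ← hc, ← hsdef, eq_div_iff hs']
    field_simp
  have hre : ((c + s*Complex.I)^2 - 1) * ((-(s/2) - Complex.I*c/2)/s)
      = (((c + s*Complex.I)^2 - 1) * (-(s/2) - Complex.I*c/2))/s := by ring
  rw [he, hvv, hre, alg_key c s hcs, div_self hs']

lemma two_mul_le_sin {g lam : ℝ} (hl : 0 < lam) (h0 : lam ≤ g) (h1 : g ≤ 1 - lam) :
    2 * lam ≤ Real.sin (π * g) := by
  rcases le_or_gt g (1/2) with hg | hg
  · have := Real.mul_le_sin (x := π * g) (by nlinarith [Real.pi_pos]) (by nlinarith [Real.pi_pos])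
    have hpi := Real.pi_pos
    calc 2 * lam ≤ 2 * g := by linarith
    _ = 2 / π * (π * g) := by field_simp
    _ ≤ _ := this
  · have h1g : Real.sin (π * g) = Real.sin (π * (1 - g)) := by
      rw [show π * (1-g) = π - π * g by ring, Real.sin_pi_sub]
    have := Real.mul_le_sin (x := π * (1 - g)) (by nlinarith [Real.pi_pos]) (by nlinarith [Real.pi_pos])
    have hpi := Real.pi_pos
    rw [h1g]
    calc 2 * lam ≤ 2 * (1 - g) := by linarith
    _ = 2 / π * (π * (1-g)) := by field_simp
    _ ≤ _ := this

lemma cot_mono {lam a b : ℝ} (hl : 0 < lam) (ha : lam ≤ a) (hab : a ≤ b) (hb : b ≤ 1 - lam) :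
    Real.cos (π * b) / Real.sin (π * b) ≤ Real.cos (π * a) / Real.sin (π * a) := by
  have hl2 : lam ≤ 1/2 := by linarith
  have hsa : 0 < Real.sin (π * a) := sin_pi_mul_pos (by linarith) (by linarith)
  have hsb : 0 < Real.sin (π * b) := sin_pi_mul_pos (by linarith) (by linarith)
  rw [div_le_div_iff₀ hsb hsa]
  have key : Real.cos (π * b) * Real.sin (π * a) + Real.sin (π * b - π * a)
      = Real.cos (π * a) * Real.sin (π * b) := by
    rw [Real.sin_sub]; ring
  have hsd : 0 ≤ Real.sin (π * b - π * a) := by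
    apply Real.sin_nonneg_of_nonneg_of_le_pi
    · nlinarith [Real.pi_pos]
    · nlinarith [Real.pi_pos]
  linarith

lemma cot_abs_le {lam g : ℝ} (hl : 0 < lam) (h0 : lam ≤ g) (h1 : g ≤ 1 - lam) :
    |Real.cos (π * g) / Real.sin (π * g)| ≤ 1 / (2 * lam) := by
  have hs := two_mul_le_sin hl h0 h1
  have hs0 : 0 < Real.sin (π * g) := by linarith
  rw [abs_div, abs_of_pos hs0]
  apply div_le_div₀ (by positivity) (Real.abs_cos_le_one _) (by positivity) (by linarith)

lemma abs_vv_le {lam g : ℝ} (hl : 0 < lam) (h0 : lam ≤ g) (h1 : g ≤ 1 - lam) :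
    ‖vv g‖ ≤ 1/2 + 1/(4*lam) := by
  set t : ℝ := Real.cos (π*g) / Real.sin (π*g) with ht
  have h2 : ‖Complex.I * ((t : ℝ) : ℂ) / 2‖ = |t| / 2 := by
    rw [norm_div, norm_mul, Complex.norm_I, one_mul, Complex.norm_real, Real.norm_eq_abs]
    norm_num
  have hn1 : ‖(-(1/2) : ℂ)‖ = 1/2 := by norm_num
  rw [vv, ← ht]
  calc ‖-(1/2 : ℂ) - Complex.I * ((t : ℝ) : ℂ) / 2‖
      ≤ ‖(-(1/2) : ℂ)‖ + ‖Complex.I * ((t : ℝ) : ℂ) / 2‖ := norm_sub_le _ _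
    _ = 1/2 + |t| / 2 := by rw [hn1, h2]
    _ ≤ 1/2 + (1/(2*lam))/2 := by
        have := cot_abs_le hl h0 h1
        rw [← ht] at this
        linarith
    _ = 1/2 + 1/(4*lam) := by ring

lemma abs_vv_sub (g1 g2 : ℝ) :
    ‖vv g1 - vv g2‖
      = |Real.cos (π*g1) / Real.sin (π*g1) - Real.cos (π*g2) / Real.sin (π*g2)| / 2 := by
  have h : vv g1 - vv g2
      = Complex.I * ((Real.cos (π*g2) / Real.sin (π*g2) - Real.cos (π*g1) / Real.sin (π*g1) : ℝ) : ℂ) / 2 := by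
    rw [vv, vv]
    push_cast
    ring
  rw [h, norm_div, norm_mul, Complex.norm_I, one_mul, Complex.norm_real, Real.norm_eq_abs, abs_sub_comm]
  norm_num

lemma sum_identity (u v : ℕ → ℂ) :
    ∀ K : ℕ, 1 ≤ K → (∀ k < K, u k = (u (k+1) - u k) * v k) →
    ∑ k ∈ Finset.range (K+1), u k
      = u K + u K * v (K-1) - u 0 * v 0 + ∑ k ∈ Finset.Ico 1 K, u k * (v (k-1) - v k) := by
  refine Nat.le_induction ?_ ?_
  · intro hterm
    simp only [Finset.sum_range_succ, Finset.sum_range_one]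
    rw [show Finset.Ico 1 1 = ∅ by rfl, Finset.sum_empty]
    have h0 := hterm 0 (by omega)
    simp only [Nat.sub_self]
    linear_combination h0
  · intro K hK ih hterm
    have ih' := ih (fun k hk => hterm k (by omega))
    rw [Finset.sum_range_succ, ih', Finset.sum_Ico_succ_top (by omega : 1 ≤ K)]
    simp only [Nat.add_sub_cancel]
    linear_combination hterm K (by omega)

lemma core (K : ℕ) (hK : 1 ≤ K) (lam : ℝ) (hlam : 0 < lam) (u : ℕ → ℂ) (g : ℕ → ℝ)
    (hu : ∀ k, k ≤ K → ‖u k‖ = 1)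
    (hrel : ∀ k, k < K → u (k+1) = u k * e (g k))
    (hg : ∀ k, k < K → lam ≤ g k ∧ g k ≤ 1 - lam)
    (hmono : (∀ j k, j ≤ k → k < K → g j ≤ g k) ∨ (∀ j k, j ≤ k → k < K → g k ≤ g j)) :
    ‖∑ k ∈ Finset.range (K+1), u k‖ ≤ 3 / lam := by
  have hl2 : lam ≤ 1/2 := by have := hg 0 (by omega); linarith [this.1, this.2]
  set ct : ℕ → ℝ := fun k => Real.cos (π * g k) / Real.sin (π * g k) with hct
  have hterm : ∀ k, k < K → u k = (u (k+1) - u k) * vv (g k) := by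
    intro k hk
    rw [hrel k hk]
    have h01 := hg k hk
    have hid := e_sub_one_mul_vv (g := g k) (by linarith [h01.1]) (by linarith [h01.2])
    linear_combination -(u k) * hid
  rw [sum_identity u (fun k => vv (g k)) K hK hterm]
  -- bound each piece
  have hgK1 := hg (K-1) (by omega)
  have hg0 := hg 0 (by omega)
  have habs1 : ‖u K‖ = 1 := by exact hu K le_rfl
  have habs2 : ‖u K * vv (g (K-1))‖ ≤ 1/2 + 1/(4*lam) := by
    rw [norm_mul, habs1, one_mul]
    exact abs_vv_le hlam hgK1.1 hgK1.2
  have habs3 : ‖u 0 * vv (g 0)‖ ≤ 1/2 + 1/(4*lam) := by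
    rw [norm_mul, hu 0 (by omega), one_mul]
    exact abs_vv_le hlam hg0.1 hg0.2
  -- telescoping sum bound
  have hcot_le : ∀ k, k < K → |ct k| ≤ 1/(2*lam) := fun k hk =>
    cot_abs_le hlam (hg k hk).1 (hg k hk).2
  have hsum : ∑ k ∈ Finset.Ico 1 K, |ct (k-1) - ct k| ≤ 1/lam := by
    have htel : ∑ k ∈ Finset.Ico 1 K, |ct (k-1) - ct k| = |ct 0 - ct (K-1)| ∨
        ∑ k ∈ Finset.Ico 1 K, |ct (k-1) - ct k| = |ct (K-1) - ct 0| := by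
      rcases hmono with hm | hm
      · left
        have hmono' : ∀ k ∈ Finset.Ico 1 K, |ct (k-1) - ct k| = ct (k-1) - ct k := by
          intro k hk
          rw [Finset.mem_Ico] at hk
          have h1 := hg (k-1) (by omega)
          have h2 := hg k (by omega)
          have := cot_mono hlam h1.1 (hm (k-1) k (by omega) (by omega)) h2.2
          rw [abs_of_nonneg (by rw [hct]; dsimp only; linarith)]
        rw [Finset.sum_congr rfl hmono', Finset.sum_Ico_eq_sum_range]
        have : ∀ i, 1 + i - 1 = i := fun i => by omega
        rw [abs_of_nonneg ?_]
        · rw [show (∑ i ∈ Finset.range (K-1), (ct (1 + i - 1) - ct (1 + i)))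
              = ∑ i ∈ Finset.range (K-1), (ct i - ct (i+1)) by
            apply Finset.sum_congr rfl; intro i _; rw [this i, Nat.add_comm 1 i],
            Finset.sum_range_sub' ct (K-1)]
        · have h1 := hg 0 (by omega)
          have h2 := hg (K-1) (by omega)
          have := cot_mono hlam h1.1 ?_ h2.2
          · rw [hct]; dsimp only; linarith
          · rcases Nat.eq_zero_or_pos (K-1) with h | h
            · rw [h]
            · exact hm 0 (K-1) (by omega) (by omega)
      · right
        have hmono' : ∀ k ∈ Finset.Ico 1 K, |ct (k-1) - ct k| = ct k - ct (k-1) := by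
          intro k hk
          rw [Finset.mem_Ico] at hk
          have h1 := hg (k-1) (by omega)
          have h2 := hg k (by omega)
          have := cot_mono hlam h2.1 (hm (k-1) k (by omega) (by omega)) h1.2
          rw [abs_of_nonpos (by rw [hct]; dsimp only; linarith), neg_sub]
        rw [Finset.sum_congr rfl hmono', Finset.sum_Ico_eq_sum_range]
        rw [abs_of_nonneg ?_]
        · rw [show (∑ i ∈ Finset.range (K-1), (ct (1 + i) - ct (1 + i - 1)))
              = ∑ i ∈ Finset.range (K-1), (ct (i+1) - ct i) by
            apply Finset.sum_congr rfl; intro i _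
            congr 1 <;> [rw [Nat.add_comm 1 i]; (congr 1; omega)],
            Finset.sum_range_sub ct (K-1)]
        · have h1 := hg 0 (by omega)
          have h2 := hg (K-1) (by omega)
          have := cot_mono hlam h2.1 ?_ h1.2
          · rw [hct]; dsimp only; linarith
          · rcases Nat.eq_zero_or_pos (K-1) with h | h
            · rw [h]
            · exact hm 0 (K-1) (by omega) (by omega)
    have hb0 := hcot_le 0 (by omega)
    have hbK := hcot_le (K-1) (by omega)
    have h1l : |ct 0 - ct (K-1)| ≤ 1/lam := by
      have := abs_sub_abs_le_abs_sub (ct 0) (ct (K-1))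
      have h2 := abs_sub (ct 0) (ct (K-1))
      calc |ct 0 - ct (K-1)| ≤ |ct 0| + |ct (K-1)| := abs_sub _ _
        _ ≤ 1/(2*lam) + 1/(2*lam) := by linarith
        _ = 1/lam := by field_simp; norm_num
    have h2l : |ct (K-1) - ct 0| ≤ 1/lam := by rw [abs_sub_comm]; exact h1l
    rcases htel with h | h <;> rw [h] <;> assumption
  have hsum2 : ‖∑ k ∈ Finset.Ico 1 K, u k * (vv (g (k-1)) - vv (g k))‖ ≤ 1/(2*lam) := by
    calc ‖∑ k ∈ Finset.Ico 1 K, u k * (vv (g (k-1)) - vv (g k))‖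
        ≤ ∑ k ∈ Finset.Ico 1 K, ‖u k * (vv (g (k-1)) - vv (g k))‖ := norm_sum_le _ _
      _ = ∑ k ∈ Finset.Ico 1 K, |ct (k-1) - ct k| / 2 := by
          apply Finset.sum_congr rfl
          intro k hk
          rw [Finset.mem_Ico] at hk
          rw [norm_mul, hu k (by omega), one_mul,
            abs_vv_sub]
      _ ≤ (1/lam) / 2 := by
          rw [← Finset.sum_div]
          linarith [hsum]
      _ = 1/(2*lam) := by ring
  have hx2 : 2 ≤ 1/lam := by rw [le_div_iff₀ hlam]; linarith
  have e1 : 1/(4*lam) = (1/lam)/4 := by ring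
  have e2 : 1/(2*lam) = (1/lam)/2 := by ring
  have e3 : 3/lam = 3*(1/lam) := by ring
  calc ‖u K + u K * vv (g (K-1)) - u 0 * vv (g 0)
          + ∑ k ∈ Finset.Ico 1 K, u k * (vv (g (k-1)) - vv (g k))‖
      ≤ ‖u K + u K * vv (g (K-1)) - u 0 * vv (g 0)‖
        + ‖∑ k ∈ Finset.Ico 1 K, u k * (vv (g (k-1)) - vv (g k))‖ := norm_add_le _ _
    _ ≤ ‖u K + u K * vv (g (K-1))‖ + ‖u 0 * vv (g 0)‖
        + ‖∑ k ∈ Finset.Ico 1 K, u k * (vv (g (k-1)) - vv (g k))‖ := by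
        have := norm_sub_le (u K + u K * vv (g (K-1))) (u 0 * vv (g 0))
        linarith
    _ ≤ ‖u K‖ + ‖u K * vv (g (K-1))‖ + ‖u 0 * vv (g 0)‖
        + ‖∑ k ∈ Finset.Ico 1 K, u k * (vv (g (k-1)) - vv (g k))‖ := by
        have := norm_add_le (u K) (u K * vv (g (K-1)))
        linarith
    _ ≤ 3/lam := by rw [e3]; rw [e1] at habs2 habs3; rw [e2] at hsum2; linarith

lemma e_neg (x : ℝ) : e (-x) = starRingEnd ℂ (e x) := by
  rw [e, e, ← Complex.exp_conj]
  congr 1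
  simp only [map_mul, Complex.conj_I, Complex.conj_ofReal, map_ofNat]
  push_cast
  ring

lemma sum_Icc_int (M N : ℤ) (h : M ≤ N) (F : ℤ → ℂ) :
    ∑ n ∈ Finset.Icc M N, F n = ∑ k ∈ Finset.range ((N - M).toNat + 1), F (M + k) := by
  apply Finset.sum_bij' (i := fun (n : ℤ) (_ : n ∈ Finset.Icc M N) => (n - M).toNat)
    (j := fun (k : ℕ) (_ : k ∈ Finset.range ((N - M).toNat + 1)) => M + k)
  · intro n hn
    rw [Finset.mem_Icc] at hn
    rw [Finset.mem_range]
    omega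
  · intro k hk
    rw [Finset.mem_range] at hk
    rw [Finset.mem_Icc]
    omega
  · intro n hn
    rw [Finset.mem_Icc] at hn
    omega
  · intro k hk
    rw [Finset.mem_range] at hk
    omega
  · intro n hn
    rw [Finset.mem_Icc] at hn
    congr 1
    omega

/-- Kusmin–Landau: there is an absolute constant `C > 0` such that for any
bounded interval `[a,b]`, any `C¹` function `f` on `[a,b]` with `f'` monotone and
`λ < |f'(t)| < 1 - λ` on `[a,b]`, one has `|∑_{n ∈ [a,b] ∩ ℤ} e(f(n))| ≤ C·λ⁻¹`. -/
theorem stmt_7 :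
    ∃ C : ℝ, 0 < C ∧ ∀ (a b : ℝ) (f : ℝ → ℝ) (lam : ℝ), a ≤ b →
      ContDiffOn ℝ 1 f (Set.Icc a b) →
      (MonotoneOn (deriv f) (Set.Icc a b) ∨ AntitoneOn (deriv f) (Set.Icc a b)) →
      0 < lam →
      (∀ t ∈ Set.Icc a b, lam < |deriv f t| ∧ |deriv f t| < 1 - lam) →
      ‖∑ n ∈ Finset.Icc ⌈a⌉ ⌊b⌋, e (f n)‖ ≤ C / lam := by
  
  refine ⟨3, by norm_num, ?_⟩
  intro a b f lam hab hcd hmono hlam hbound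
  set M : ℤ := ⌈a⌉ with hM
  set N : ℤ := ⌊b⌋ with hN
  have hlam2 : lam < 1/2 := by
    have := hbound a ⟨le_refl a, hab⟩
    have h0 : (0:ℝ) ≤ |deriv f a| := abs_nonneg _
    linarith [this.1, this.2]
  rcases lt_or_ge N M with hNM | hMN
  · rw [Finset.Icc_eq_empty (by exact_mod_cast not_le.mpr hNM), Finset.sum_empty]
    rw [norm_zero]
    positivity
  rcases eq_or_lt_of_le hMN with hMN' | hMN'
  · rw [← hMN', Finset.Icc_self, Finset.sum_singleton, abs_e]
    rw [le_div_iff₀ hlam]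
    linarith
  -- main case M < N
  have hMa : a ≤ (M:ℝ) := Int.le_ceil a
  have hNb : (N:ℝ) ≤ b := Int.floor_le b
  set K : ℕ := (N - M).toNat with hK
  have hK1 : 1 ≤ K := by omega
  have hNK : N = M + K := by omega
  -- endpoints of unit subintervals
  have hxk_mem : ∀ k : ℕ, k < K → a ≤ (M:ℝ) + k ∧ (M:ℝ) + k + 1 ≤ b := by
    intro k hk
    constructor
    · have : (0:ℝ) ≤ (k:ℝ) := Nat.cast_nonneg k
      linarith
    · have h1 : (M:ℝ) + k + 1 ≤ (N:ℝ) := by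
        have : (M + k + 1 : ℤ) ≤ N := by omega
        exact_mod_cast this
      linarith
  -- MVT
  have hc : ∀ k : ℕ, k < K → ∃ c ∈ Set.Ioo ((M:ℝ)+k) ((M:ℝ)+k+1),
      deriv f c = f ((M:ℝ)+k+1) - f ((M:ℝ)+k) := by
    intro k hk
    obtain ⟨hma, hmb⟩ := hxk_mem k hk
    have hlt : (M:ℝ)+k < (M:ℝ)+k+1 := by linarith
    have hsub : Set.Icc ((M:ℝ)+k) ((M:ℝ)+k+1) ⊆ Set.Icc a b := Set.Icc_subset_Icc hma hmb
    have hcont : ContinuousOn f (Set.Icc ((M:ℝ)+k) ((M:ℝ)+k+1)) :=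
      hcd.continuousOn.mono hsub
    have hdiff : DifferentiableOn ℝ f (Set.Ioo ((M:ℝ)+k) ((M:ℝ)+k+1)) := by
      intro x hx
      apply DifferentiableAt.differentiableWithinAt
      have hxab : x ∈ Set.Ioo a b := ⟨lt_of_le_of_lt hma hx.1, lt_of_lt_of_le hx.2 hmb⟩
      have : ContDiffAt ℝ 1 f x :=
        (hcd x (Set.Ioo_subset_Icc_self hxab)).contDiffAt
          (Filter.mem_of_superset (Icc_mem_nhds hxab.1 hxab.2) Set.Subset.rfl)
      exact this.differentiableAt one_ne_zero
    obtain ⟨c, hc1, hc2⟩ := exists_deriv_eq_slope f hlt hcont hdiff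
    refine ⟨c, hc1, ?_⟩
    rw [hc2]
    field_simp
    ring
  set c : ℕ → ℝ := fun k => if h : k < K then (hc k h).choose else 0 with hcdef
  have hcIoo : ∀ k : ℕ, k < K → c k ∈ Set.Ioo ((M:ℝ)+k) ((M:ℝ)+k+1) := by
    intro k hk
    rw [hcdef]; dsimp only; rw [dif_pos hk]
    exact (hc k hk).choose_spec.1
  have hcder : ∀ k : ℕ, k < K → deriv f (c k) = f ((M:ℝ)+k+1) - f ((M:ℝ)+k) := by
    intro k hk
    rw [hcdef]; dsimp only; rw [dif_pos hk]
    exact (hc k hk).choose_spec.2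
  have hcab : ∀ k : ℕ, k < K → c k ∈ Set.Ioo a b := by
    intro k hk
    obtain ⟨hma, hmb⟩ := hxk_mem k hk
    have h := hcIoo k hk
    exact ⟨lt_of_le_of_lt hma h.1, lt_of_lt_of_le h.2 hmb⟩
  set G : ℕ → ℝ := fun k => deriv f (c k) with hG
  have hGbnd : ∀ k : ℕ, k < K → lam < |G k| ∧ |G k| < 1 - lam := fun k hk =>
    hbound (c k) (Set.Ioo_subset_Icc_self (hcab k hk))
  -- monotonicity of G
  have hGmono : (∀ j k, j ≤ k → k < K → G j ≤ G k) ∨ (∀ j k, j ≤ k → k < K → G k ≤ G j) := by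
    have hord : ∀ j k : ℕ, j ≤ k → k < K → c j ≤ c k := by
      intro j k hjk hk
      rcases eq_or_lt_of_le hjk with h | h
      · rw [h]
      · have h1 := (hcIoo j (by omega)).2
        have h2 := (hcIoo k hk).1
        have : (j:ℝ) + 1 ≤ (k:ℝ) := by exact_mod_cast Nat.succ_le_of_lt h
        linarith
    rcases hmono with hm | hm
    · left
      intro j k hjk hk
      exact hm (Set.Ioo_subset_Icc_self (hcab j (by omega)))
        (Set.Ioo_subset_Icc_self (hcab k hk)) (hord j k hjk hk)
    · right
      intro j k hjk hk
      exact hm (Set.Ioo_subset_Icc_self (hcab j (by omega)))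
        (Set.Ioo_subset_Icc_self (hcab k hk)) (hord j k hjk hk)
  -- sign dichotomy
  have hcont' : ContinuousOn (deriv f) (Set.Ioo a b) :=
    (hcd.mono Set.Ioo_subset_Icc_self).continuousOn_deriv_of_isOpen isOpen_Ioo le_rfl
  have hsign : (∀ k, k < K → 0 < G k) ∨ (∀ k, k < K → G k < 0) := by
    by_contra hcon
    push_neg at hcon
    obtain ⟨⟨i, hi, hGi⟩, ⟨j, hj, hGj⟩⟩ := hcon
    have hGi' : G i ≤ 0 := hGi
    have hGj' : 0 ≤ G j := hGj
    have hGinz : G i < 0 := by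
      rcases lt_or_eq_of_le hGi' with h | h
      · exact h
      · exfalso; have := (hGbnd i hi).1; rw [h] at this; simp at this; linarith
    have hGjnz : 0 < G j := by
      rcases lt_or_eq_of_le hGj' with h | h
      · exact h
      · exfalso; have := (hGbnd j hj).1; rw [← h] at this; simp at this; linarith
    have hsub : Set.uIcc (c i) (c j) ⊆ Set.Ioo a b :=
      Set.OrdConnected.uIcc_subset Set.ordConnected_Ioo (hcab i hi) (hcab j hj)
    have hivt := intermediate_value_uIcc (hcont'.mono hsub)
    have h0mem : (0:ℝ) ∈ Set.uIcc (deriv f (c i)) (deriv f (c j)) :=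
      Set.mem_uIcc.2 (Or.inl ⟨le_of_lt hGinz, le_of_lt hGjnz⟩)
    obtain ⟨t, ht, hft⟩ := hivt h0mem
    have htab : t ∈ Set.Icc a b := Set.Ioo_subset_Icc_self (hsub ht)
    have := (hbound t htab).1
    rw [hft] at this
    simp at this
    linarith
  -- reindex the sum
  have hreidx : ∀ F : ℤ → ℂ, ∑ n ∈ Finset.Icc M N, F n
      = ∑ k ∈ Finset.range (K+1), F (M + k) := by
    intro F
    rw [sum_Icc_int M N (le_of_lt hMN') F, hK]
  rcases hsign with hpos | hneg
  · -- positive case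
    have hcore := core K hK1 lam hlam (fun k => e (f ((M:ℝ) + k))) G
      (fun k _ => abs_e _)
      (by
        intro k hk
        show e (f ((M:ℝ) + ((k+1:ℕ):ℝ))) = e (f ((M:ℝ) + (k:ℝ))) * e (G k)
        have harg : ((M:ℝ) + ((k+1:ℕ):ℝ)) = (M:ℝ) + (k:ℝ) + 1 := by push_cast; ring
        rw [harg, ← e_add]
        congr 1
        have hGk : G k = f ((M:ℝ)+k+1) - f ((M:ℝ)+k) := hcder k hk
        rw [hGk]
        ring)
      (by
        intro k hk
        have h := hGbnd k hk
        have habs : |G k| = G k := abs_of_pos (hpos k hk)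
        rw [habs] at h
        exact ⟨le_of_lt h.1, le_of_lt h.2⟩)
      hGmono
    rw [hreidx (fun n => e (f (n:ℝ)))]
    calc ‖∑ k ∈ Finset.range (K+1), e (f ((M + (k:ℕ) : ℤ) : ℝ))‖
        = ‖∑ k ∈ Finset.range (K+1), e (f ((M:ℝ) + k))‖ := by
          congr 1
          apply Finset.sum_congr rfl
          intro k _
          congr 2
          push_cast
          ring
      _ ≤ 3 / lam := hcore
  · -- negative case
    have hcore := core K hK1 lam hlam (fun k => e (-f ((M:ℝ) + k))) (fun k => -G k)
      (fun k _ => abs_e _)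
      (by
        intro k hk
        show e (-f ((M:ℝ) + ((k+1:ℕ):ℝ))) = e (-f ((M:ℝ) + (k:ℝ))) * e (-G k)
        have harg : ((M:ℝ) + ((k+1:ℕ):ℝ)) = (M:ℝ) + (k:ℝ) + 1 := by push_cast; ring
        rw [harg, ← e_add]
        congr 1
        have hGk : G k = f ((M:ℝ)+k+1) - f ((M:ℝ)+k) := hcder k hk
        rw [hGk]
        ring)
      (by
        intro k hk
        have h := hGbnd k hk
        have habs : |G k| = -G k := abs_of_neg (hneg k hk)
        rw [habs] at h
        exact ⟨le_of_lt h.1, le_of_lt h.2⟩)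
      (by
        rcases hGmono with hm | hm
        · right; intro j k hjk hk; simp only [neg_le_neg_iff]; exact hm j k hjk hk
        · left; intro j k hjk hk; simp only [neg_le_neg_iff]; exact hm j k hjk hk)
    have hconj : ∑ n ∈ Finset.Icc M N, e (f (n:ℝ))
        = starRingEnd ℂ (∑ n ∈ Finset.Icc M N, e (-f (n:ℝ))) := by
      rw [map_sum]
      apply Finset.sum_congr rfl
      intro n _
      rw [← e_neg, neg_neg]
    rw [hconj, Complex.norm_conj, hreidx (fun n => e (-f (n:ℝ)))]
    calc ‖∑ k ∈ Finset.range (K+1), e (-f ((M + (k:ℕ) : ℤ) : ℝ))‖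
        = ‖∑ k ∈ Finset.range (K+1), e (-f ((M:ℝ) + k))‖ := by
          congr 1
          apply Finset.sum_congr rfl
          intro k _
          congr 3
          push_cast
          ring
      _ ≤ 3 / lam := hcore


end
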